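/- arXiv:2509.20496 — 4 statements merged into one kernel-verified Lean document; each statement's English description precedes it below -/
import Mathlib

section
/- Let X be a set, H a complex Hilbert space, and K, L : X × X → L(H) positive definite kernels with K ≤ L. Suppose L admits a minimal Kolmogorov decomposition L(s,t) = V_L(s)* V_L(t) with V_L(t) : H → 𝒦_L. Then there exists a unique operator A ∈ L(𝒦_L) such that (i) 0 ≤ A ≤ I (A is positive and I − A is positive), and (ii) K(s,t) = V_L(s)* A V_L(t) for all s, t ∈ X. -/
open scoped ComplexInnerProductSpace ComplexOrder

/-- An operator-valued kernel `K : X × X → L(H)` is positive definite if for every finite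
family `(x_j, u_j)` one has `∑_{i,j} ⟪u_i, K (x_i) (x_j) u_j⟫ ≥ 0`. -/
def IsPDKernel {X H : Type*} [NormedAddCommGroup H] [InnerProductSpace ℂ H]
    (K : X → X → H →L[ℂ] H) : Prop :=
  ∀ (n : ℕ) (x : Fin n → X) (u : Fin n → H),
    0 ≤ ∑ i, ∑ j, ⟪u i, K (x i) (x j) (u j)⟫

namespace Stmt6Aux

open ContinuousLinearMap Finsupp

variable {X H : Type*} [NormedAddCommGroup H] [InnerProductSpace ℂ H]

/-- The sesquilinear form induced by an operator-valued kernel on formal finite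
combinations of pairs `(t, h)`. -/
noncomputable def kform (M : X → X → H →L[ℂ] H) (f g : (X × H) →₀ ℂ) : ℂ :=
  f.sum fun p a => g.sum fun q b => (starRingEnd ℂ) a * b * ⟪p.2, M p.1 q.1 q.2⟫

lemma kform_add_right (M : X → X → H →L[ℂ] H) (f g g' : (X × H) →₀ ℂ) :
    kform M f (g + g') = kform M f g + kform M f g' := by
  unfold kform
  rw [← Finsupp.sum_add]
  congr 1; ext p a
  exact Finsupp.sum_add_index' (by simp) (by intros; ring)

lemma kform_smul_right (M : X → X → H →L[ℂ] H) (c : ℂ) (f g : (X × H) →₀ ℂ) :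
    kform M f (c • g) = c * kform M f g := by
  unfold kform
  rw [Finsupp.mul_sum]
  congr 1; ext p a
  rw [Finsupp.sum_smul_index' (by simp), Finsupp.mul_sum]
  congr 1; ext q b
  simp only [smul_eq_mul]; ring

lemma kform_add_left (M : X → X → H →L[ℂ] H) (f f' g : (X × H) →₀ ℂ) :
    kform M (f + f') g = kform M f g + kform M f' g := by
  unfold kform
  refine Finsupp.sum_add_index' (by simp) (fun p a a' => ?_)
  rw [← Finsupp.sum_add]
  congr 1; ext q b
  simp only [map_add]; ring

lemma kform_smul_left (M : X → X → H →L[ℂ] H) (c : ℂ) (f g : (X × H) →₀ ℂ) :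
    kform M (c • f) g = (starRingEnd ℂ) c * kform M f g := by
  unfold kform
  rw [Finsupp.sum_smul_index' (by simp), Finsupp.mul_sum]
  congr 1; ext p a
  rw [Finsupp.mul_sum]
  congr 1; ext q b
  simp only [smul_eq_mul, map_mul]; ring

lemma kform_sub_kernel (M N : X → X → H →L[ℂ] H) (f g : (X × H) →₀ ℂ) :
    kform (fun s t => M s t - N s t) f g = kform M f g - kform N f g := by
  unfold kform
  rw [← Finsupp.sum_sub]
  congr 1; ext p a
  rw [← Finsupp.sum_sub]
  congr 1; ext q b
  simp only [ContinuousLinearMap.sub_apply, inner_sub_right]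
  ring

lemma kform_single_single (M : X → X → H →L[ℂ] H) (p q : X × H) :
    kform M (Finsupp.single p 1) (Finsupp.single q 1) = ⟪p.2, M p.1 q.1 q.2⟫ := by
  unfold kform
  rw [Finsupp.sum_single_index (by simp), Finsupp.sum_single_index (by simp)]
  simp


lemma pd_diag_nonneg {M : X → X → H →L[ℂ] H} (hM : IsPDKernel M) (x : X) (w : H) :
    0 ≤ ⟪w, M x x w⟫ := by
  simpa using hM 1 ![x] ![w]

lemma pd_herm {M : X → X → H →L[ℂ] H} (hM : IsPDKernel M) (s t : X) (u v : H) :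
    ⟪v, M t s u⟫ = (starRingEnd ℂ) ⟪u, M s t v⟫ := by
  have key : ∀ v' : H, (⟪u, M s t v'⟫ + ⟪v', M t s u⟫).im = 0 := by
    intro v'
    have h2 := hM 2 ![s, t] ![u, v']
    rw [Fin.sum_univ_two, Fin.sum_univ_two, Fin.sum_univ_two] at h2
    simp only [Matrix.cons_val_zero, Matrix.cons_val_one, Matrix.head_cons] at h2
    have him := ((Complex.le_def.1 h2).2).symm
    have d1 := ((Complex.le_def.1 (pd_diag_nonneg hM s u)).2).symm
    have d2 := ((Complex.le_def.1 (pd_diag_nonneg hM t v')).2).symm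
    simp only [Complex.add_im, Complex.zero_im] at him d1 d2 ⊢
    linarith
  have k1 := key v
  have k2 := key ((Complex.I : ℂ) • v)
  rw [map_smul, inner_smul_right, inner_smul_left] at k2
  simp only [Complex.add_im, Complex.mul_im, Complex.conj_re, Complex.conj_im,
    Complex.I_re, Complex.I_im] at k1 k2
  apply Complex.ext
  · simp only [Complex.conj_re]; linarith
  · simp only [Complex.conj_im]; linarith

lemma kform_conj {M : X → X → H →L[ℂ] H} (hM : IsPDKernel M) (f g : (X × H) →₀ ℂ) :
    kform M g f = (starRingEnd ℂ) (kform M f g) := by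
  simp only [kform, Finsupp.sum, map_sum]
  rw [Finset.sum_comm]
  refine Finset.sum_congr rfl fun p _ => Finset.sum_congr rfl fun q _ => ?_
  rw [pd_herm hM p.1 q.1 p.2 q.2]
  simp only [map_mul, Complex.conj_conj]
  ring

lemma kform_self_nonneg {M : X → X → H →L[ℂ] H} (hM : IsPDKernel M) (f : (X × H) →₀ ℂ) :
    0 ≤ kform M f f := by
  classical
  let e := f.support.equivFin.symm
  have h2 := hM f.support.card (fun i => ((e i : X × H)).1)
      (fun i => f (e i : X × H) • ((e i : X × H)).2)
  simp only [map_smul, inner_smul_left, inner_smul_right] at h2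
  have key : kform M f f = ∑ i, ∑ j,
      f (e j : X × H) * ((starRingEnd ℂ) (f (e i : X × H)) *
        ⟪((e i : X × H)).2, M ((e i : X × H)).1 ((e j : X × H)).1 ((e j : X × H)).2⟫) := by
    simp only [kform, Finsupp.sum]
    rw [← Finset.sum_coe_sort f.support, ← e.sum_comp]
    refine Fintype.sum_congr _ _ fun i => ?_
    rw [← Finset.sum_coe_sort f.support, ← e.sum_comp]
    exact Fintype.sum_congr _ _ fun j => by ring
  rw [key]
  exact h2

lemma kform_cs {M : X → X → H →L[ℂ] H} (hM : IsPDKernel M) (f g : (X × H) →₀ ℂ) :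
    Complex.normSq (kform M f g) ≤ (kform M f f).re * (kform M g g).re := by
  set b := kform M f g with hb
  set Bff := kform M f f with hBff
  set Bgg := kform M g g with hBgg
  have hff := kform_self_nonneg hM f
  have hgg := kform_self_nonneg hM g
  have hffim : Bff.im = 0 := ((Complex.le_def.1 hff).2).symm
  have hggim : Bgg.im = 0 := ((Complex.le_def.1 hgg).2).symm
  have expand : ∀ z : ℂ, kform M (f + z • g) (f + z • g)
      = Bff + z * b + (starRingEnd ℂ) z * (starRingEnd ℂ) b
        + (starRingEnd ℂ) z * z * Bgg := by
    intro z
    rw [kform_add_left, kform_add_right, kform_add_right, kform_smul_right,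
      kform_smul_left, kform_smul_left, kform_smul_right, kform_conj hM f g]
    ring
  have quad : ∀ t : ℝ, 0 ≤ (Complex.normSq b * Bgg.re) * (t * t)
      + (2 * Complex.normSq b) * t + Bff.re := by
    intro t
    have ht := kform_self_nonneg hM (f + ((t : ℂ) * (starRingEnd ℂ) b) • g)
    rw [expand] at ht
    have hre := (Complex.le_def.1 ht).1
    simp only [Complex.zero_re, Complex.add_re, Complex.mul_re, Complex.mul_im,
      Complex.ofReal_re, Complex.ofReal_im, Complex.conj_re, Complex.conj_im,
      Complex.normSq_apply, hffim, hggim] at hre ⊢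
    nlinarith [hre]
  have hd := discrim_le_zero quad
  rw [discrim] at hd
  rcases eq_or_lt_of_le (Complex.normSq_nonneg b) with h0 | h0
  · rw [← h0]
    exact mul_nonneg (Complex.le_def.1 hff).1 (Complex.le_def.1 hgg).1
  · nlinarith [hd, h0]


variable {𝒦 : Type*} [NormedAddCommGroup 𝒦] [InnerProductSpace ℂ 𝒦]

/-- The canonical map from formal combinations to `𝒦`. -/
noncomputable def piV (V : X → H →L[ℂ] 𝒦) : ((X × H) →₀ ℂ) →ₗ[ℂ] 𝒦 :=
  Finsupp.linearCombination ℂ (fun p : X × H => V p.1 p.2)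

lemma piV_single (V : X → H →L[ℂ] 𝒦) (p : X × H) :
    piV V (Finsupp.single p 1) = V p.1 p.2 := by
  simp [piV, Finsupp.linearCombination_single]

lemma kform_L_inner [CompleteSpace H] [CompleteSpace 𝒦] (L : X → X → H →L[ℂ] H)
    (V : X → H →L[ℂ] 𝒦) (hdec : ∀ s t, L s t = ContinuousLinearMap.adjoint (V s) ∘L V t)
    (f g : (X × H) →₀ ℂ) :
    kform L f g = ⟪piV V f, piV V g⟫ := by
  simp only [kform, piV, Finsupp.linearCombination_apply, Finsupp.sum]
  rw [sum_inner]
  refine Finset.sum_congr rfl fun p _ => ?_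
  rw [inner_sum]
  refine Finset.sum_congr rfl fun q _ => ?_
  rw [inner_smul_left, inner_smul_right, hdec p.1 q.1]
  simp only [ContinuousLinearMap.coe_comp', Function.comp_apply,
    ContinuousLinearMap.adjoint_inner_right]
  ring

lemma range_piV (V : X → H →L[ℂ] 𝒦) :
    LinearMap.range (piV V) = Submodule.span ℂ {y : 𝒦 | ∃ t h, V t h = y} := by
  apply le_antisymm
  · rintro y ⟨f, rfl⟩
    simp only [piV, Finsupp.linearCombination_apply, Finsupp.sum]
    refine Submodule.sum_mem _ fun p _ => Submodule.smul_mem _ _ ?_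
    exact Submodule.subset_span ⟨p.1, p.2, rfl⟩
  · rw [Submodule.span_le]
    rintro y ⟨t, h, rfl⟩
    exact ⟨Finsupp.single (t, h) 1, piV_single V (t, h)⟩

/-- Generic extension: a linear map dominated by `‖π ·‖` factors through the closure of the
range of `π`. -/
lemma extend_exists {W : Type*} [AddCommGroup W] [Module ℂ W]
    {G : Type*} [NormedAddCommGroup G] [NormedSpace ℂ G] [CompleteSpace G]
    (π : W →ₗ[ℂ] 𝒦) (hR : Dense ((LinearMap.range π : Submodule ℂ 𝒦) : Set 𝒦))
    (T : W →ₗ[ℂ] G) (C : ℝ)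
    (hT : ∀ f, ‖T f‖ ≤ C * ‖π f‖) :
    ∃ T' : 𝒦 →L[ℂ] G, ∀ f, T' (π f) = T f := by
  have hker : LinearMap.ker π ≤ LinearMap.ker T := by
    intro f hf
    have h1 := hT f
    rw [LinearMap.mem_ker.1 hf] at h1
    simp only [norm_zero, mul_zero] at h1
    exact LinearMap.mem_ker.2 (norm_le_zero_iff.1 h1)
  let T₁ : (W ⧸ LinearMap.ker π) →ₗ[ℂ] G := Submodule.liftQ _ T hker
  let e := π.quotKerEquivRange
  let T₂ : LinearMap.range π →ₗ[ℂ] G := T₁.comp (e.symm : _ →ₗ[ℂ] _)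
  have hT₂ : ∀ f : W, T₂ ⟨π f, LinearMap.mem_range_self π f⟩ = T f := by
    intro f
    have he : e (Submodule.Quotient.mk f) = ⟨π f, LinearMap.mem_range_self π f⟩ := by
      ext
      exact π.quotKerEquivRange_apply_mk f
    simp only [T₂, LinearMap.comp_apply]
    rw [← he, LinearEquiv.coe_coe, LinearEquiv.symm_apply_apply]
    rfl
  have hbound : ∀ y : LinearMap.range π, ‖T₂ y‖ ≤ C * ‖y‖ := by
    rintro ⟨y, f, rfl⟩
    rw [hT₂ f]
    exact hT f
  let T₃ : LinearMap.range π →L[ℂ] G := T₂.mkContinuous C hbound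
  have hdr : DenseRange ((LinearMap.range π).subtypeL) := by
    have : Set.range ((LinearMap.range π).subtypeL)
        = ((LinearMap.range π : Submodule ℂ 𝒦) : Set 𝒦) := Subtype.range_coe
    rw [DenseRange, this]
    exact hR
  have hui : IsUniformInducing ((LinearMap.range π).subtypeL) :=
    isUniformEmbedding_subtype_val.isUniformInducing
  refine ⟨T₃.extend ((LinearMap.range π).subtypeL), fun f => ?_⟩
  have hee := ContinuousLinearMap.extend_eq T₃ (e := (LinearMap.range π).subtypeL) hdr hui
    ⟨π f, LinearMap.mem_range_self π f⟩
  have : ((LinearMap.range π).subtypeL ⟨π f, LinearMap.mem_range_self π f⟩) = π f := rfl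
  rw [this] at hee
  rw [hee]
  exact hT₂ f

end Stmt6Aux

open Stmt6Aux

/-- Radon–Nikodym derivative for kernels. If `K ≤ L` are positive definite
kernels and `L(s,t) = V_L(s)* V_L(t)` is a minimal Kolmogorov decomposition, then there is a
unique operator `A` with `0 ≤ A ≤ I` and `K(s,t) = V_L(s)* A V_L(t)` for all `s, t`. -/
theorem stmt6 {X H 𝒦 : Type*} [NormedAddCommGroup H] [InnerProductSpace ℂ H] [CompleteSpace H]
    [NormedAddCommGroup 𝒦] [InnerProductSpace ℂ 𝒦] [CompleteSpace 𝒦]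
    (K L : X → X → H →L[ℂ] H) (hK : IsPDKernel K) (hL : IsPDKernel L)
    (hKL : IsPDKernel (fun s t => L s t - K s t))
    (V : X → H →L[ℂ] 𝒦)
    (hdec : ∀ s t, L s t = ContinuousLinearMap.adjoint (V s) ∘L V t)
    (hmin : Dense (Submodule.span ℂ {y : 𝒦 | ∃ t h, V t h = y} : Set 𝒦)) :
    ∃! A : 𝒦 →L[ℂ] 𝒦,
      (∀ x : 𝒦, 0 ≤ ⟪x, A x⟫) ∧ (∀ x : 𝒦, 0 ≤ ⟪x, ((1 : 𝒦 →L[ℂ] 𝒦) - A) x⟫) ∧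
      ∀ s t, K s t = ContinuousLinearMap.adjoint (V s) ∘L (A ∘L V t) := by
  classical
  set π := piV V with hπdef
  have hRdense : Dense ((LinearMap.range π : Submodule ℂ 𝒦) : Set 𝒦) := by
    rw [hπdef, range_piV]; exact hmin
  have hLf : ∀ f g, kform L f g = ⟪π f, π g⟫ := fun f g => kform_L_inner L V hdec f g
  have hKre_nonneg : ∀ f, 0 ≤ (kform K f f).re :=
    fun f => (Complex.le_def.1 (kform_self_nonneg hK f)).1
  have hLre : ∀ f, (kform L f f).re = ‖π f‖ ^ 2 := by
    intro f
    rw [hLf f f, inner_self_eq_norm_sq_to_K]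
    simp [← Complex.ofReal_pow]
  have hKleL : ∀ f, (kform K f f).re ≤ ‖π f‖ ^ 2 := by
    intro f
    have h1 := kform_self_nonneg hKL f
    rw [kform_sub_kernel] at h1
    have h2 := (Complex.le_def.1 h1).1
    rw [Complex.zero_re, Complex.sub_re] at h2
    linarith [hLre f]
  have habs : ∀ g f, ‖kform K g f‖ ≤ ‖π g‖ * ‖π f‖ := by
    intro g f
    have hcs := kform_cs hK g f
    have h3 : ‖kform K g f‖ ^ 2 ≤ (‖π g‖ * ‖π f‖) ^ 2 := by
      calc ‖kform K g f‖ ^ 2 = Complex.normSq (kform K g f) := by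
            rw [Complex.sq_norm]
        _ ≤ (kform K g g).re * (kform K f f).re := hcs
        _ ≤ ‖π g‖ ^ 2 * ‖π f‖ ^ 2 :=
            mul_le_mul (hKleL g) (hKleL f) (hKre_nonneg f) (by positivity)
        _ = (‖π g‖ * ‖π f‖) ^ 2 := by ring
    exact le_of_pow_le_pow_left₀ two_ne_zero (by positivity) h3
  -- density transfer principle
  have hdense_all : ∀ (P : 𝒦 → Prop), IsClosed {x | P x} → (∀ f, P (π f)) → ∀ x, P x := by
    intro P hcl hP x
    have hsub : ((LinearMap.range π : Submodule ℂ 𝒦) : Set 𝒦) ⊆ {x | P x} := by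
      rintro y ⟨f, rfl⟩; exact hP f
    exact closure_minimal hsub hcl (hRdense x)
  -- the functionals
  let lin : ((X × H) →₀ ℂ) → ((X × H) →₀ ℂ) →ₗ[ℂ] ℂ := fun g =>
    { toFun := fun f => kform K g f
      map_add' := fun f f' => kform_add_right K g f f'
      map_smul' := fun c f => by simpa using kform_smul_right K c g f }
  have hℓ : ∀ g, ∃ ℓ : 𝒦 →L[ℂ] ℂ, ∀ f, ℓ (π f) = kform K g f := by
    intro g
    exact extend_exists π hRdense (lin g) (‖π g‖) (fun f => habs g f)
  choose ℓ hℓeq using hℓ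
  let A₀ : ((X × H) →₀ ℂ) → 𝒦 := fun g => (InnerProductSpace.toDual ℂ 𝒦).symm (ℓ g)
  have hA₀ : ∀ g f, ⟪A₀ g, π f⟫ = kform K g f := by
    intro g f
    rw [show A₀ g = (InnerProductSpace.toDual ℂ 𝒦).symm (ℓ g) from rfl,
      InnerProductSpace.toDual_symm_apply]
    exact hℓeq g f
  have hdense_eq : ∀ z : 𝒦, (∀ f, ⟪z, π f⟫ = 0) → z = 0 := by
    intro z hz
    have hzero : ∀ x, ⟪z, x⟫ = (0 : ℂ) :=
      hdense_all (fun x => ⟪z, x⟫ = 0)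
        (isClosed_eq (Continuous.inner continuous_const continuous_id) continuous_const) hz
    exact inner_self_eq_zero.1 (hzero z)
  have hA₀add : ∀ g g', A₀ (g + g') = A₀ g + A₀ g' := by
    intro g g'
    have h1 : ∀ f, ⟪A₀ (g + g') - (A₀ g + A₀ g'), π f⟫ = 0 := by
      intro f
      rw [inner_sub_left, inner_add_left, hA₀, hA₀, hA₀, kform_add_left]
      ring
    have h2 := hdense_eq _ h1
    rwa [sub_eq_zero] at h2
  have hA₀smul : ∀ (c : ℂ) g, A₀ (c • g) = c • A₀ g := by
    intro c g
    have h1 : ∀ f, ⟪A₀ (c • g) - c • A₀ g, π f⟫ = 0 := by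
      intro f
      rw [inner_sub_left, inner_smul_left, hA₀, hA₀, kform_smul_left]
      ring
    have h2 := hdense_eq _ h1
    rwa [sub_eq_zero] at h2
  have hA₀norm : ∀ g, ‖A₀ g‖ ≤ ‖π g‖ := by
    intro g
    have hx : ∀ x : 𝒦, ‖⟪A₀ g, x⟫‖ ≤ ‖π g‖ * ‖x‖ := by
      refine hdense_all (fun x => ‖⟪A₀ g, x⟫‖ ≤ ‖π g‖ * ‖x‖)
        (isClosed_le ((Continuous.inner continuous_const continuous_id).norm)
          (continuous_const.mul continuous_norm)) (fun f => ?_)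
      show ‖⟪A₀ g, π f⟫‖ ≤ ‖π g‖ * ‖π f‖
      rw [hA₀ g f]
      exact habs g f
    rcases eq_or_lt_of_le (norm_nonneg (A₀ g)) with h0 | h0
    · rw [← h0]; exact norm_nonneg _
    · have h2 := hx (A₀ g)
      rw [inner_self_eq_norm_sq_to_K] at h2
      simp only [norm_pow, RCLike.norm_ofReal, abs_norm] at h2
      rw [pow_two] at h2
      exact le_of_mul_le_mul_right h2 h0
  let A₀lin : ((X × H) →₀ ℂ) →ₗ[ℂ] 𝒦 :=
    { toFun := A₀
      map_add' := hA₀add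
      map_smul' := fun c g => by simpa using hA₀smul c g }
  obtain ⟨A, hA⟩ := extend_exists π hRdense A₀lin 1 (fun g => by rw [one_mul]; exact hA₀norm g)
  have hAπ : ∀ g, A (π g) = A₀ g := hA
  have hAinner : ∀ f g, ⟪π f, A (π g)⟫ = kform K f g := by
    intro f g
    rw [hAπ g, ← inner_conj_symm, hA₀ g f, kform_conj hK f g]
    simp
  -- property (iii)
  have hKst : ∀ s t, K s t = ContinuousLinearMap.adjoint (V s) ∘L (A ∘L V t) := by
    intro s t
    refine ContinuousLinearMap.ext fun k => ?_
    refine ext_inner_left ℂ fun h => ?_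
    simp only [ContinuousLinearMap.coe_comp', Function.comp_apply,
      ContinuousLinearMap.adjoint_inner_right]
    have h1 : V s h = π (Finsupp.single (s, h) 1) := (piV_single V (s, h)).symm
    have h2 : V t k = π (Finsupp.single (t, k) 1) := (piV_single V (t, k)).symm
    rw [h1, h2, hAinner, kform_single_single]
  -- positivity
  have hclnn : IsClosed {z : ℂ | 0 ≤ z} := by
    have hset : {z : ℂ | 0 ≤ z} = Complex.re ⁻¹' Set.Ici 0 ∩ Complex.im ⁻¹' {0} := by
      ext z
      simp [Complex.le_def, eq_comm]
    rw [hset]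
    exact (isClosed_Ici.preimage Complex.continuous_re).inter
      (isClosed_singleton.preimage Complex.continuous_im)
  have hpos : ∀ x : 𝒦, 0 ≤ ⟪x, A x⟫ := by
    refine hdense_all (fun x => 0 ≤ ⟪x, A x⟫)
      (hclnn.preimage (Continuous.inner continuous_id A.continuous)) (fun f => ?_)
    show 0 ≤ ⟪π f, A (π f)⟫
    rw [hAinner f f]
    exact kform_self_nonneg hK f
  have hpos2 : ∀ x : 𝒦, 0 ≤ ⟪x, ((1 : 𝒦 →L[ℂ] 𝒦) - A) x⟫ := by
    refine hdense_all (fun x => 0 ≤ ⟪x, ((1 : 𝒦 →L[ℂ] 𝒦) - A) x⟫)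
      (hclnn.preimage (Continuous.inner continuous_id
        ((1 : 𝒦 →L[ℂ] 𝒦) - A).continuous)) (fun f => ?_)
    show 0 ≤ ⟪π f, ((1 : 𝒦 →L[ℂ] 𝒦) - A) (π f)⟫
    simp only [ContinuousLinearMap.sub_apply, ContinuousLinearMap.one_apply, inner_sub_right]
    rw [hAinner f f, ← hLf f f, ← kform_sub_kernel]
    exact kform_self_nonneg hKL f
  refine ⟨A, ⟨hpos, hpos2, hKst⟩, ?_⟩
  rintro A' ⟨h1', h2', h3'⟩
  -- uniqueness
  have step0 : ∀ s t (h k : H), ⟪V s h, A' (V t k)⟫ = ⟪V s h, A (V t k)⟫ := by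
    intro s t h k
    have heq := (h3' s t).symm.trans (hKst s t)
    have happ := congrArg (fun B : H →L[ℂ] H => (⟪h, B k⟫ : ℂ)) heq
    simpa only [ContinuousLinearMap.coe_comp', Function.comp_apply,
      ContinuousLinearMap.adjoint_inner_right] using happ
  have hsum : ∀ (z : 𝒦) f, ⟪π f, z⟫
      = f.sum fun p a => (starRingEnd ℂ) a * ⟪V p.1 p.2, z⟫ := by
    intro z f
    rw [hπdef]
    simp only [piV, Finsupp.linearCombination_apply, Finsupp.sum, sum_inner, inner_smul_left]
  have step1 : ∀ f t k, ⟪π f, A' (V t k)⟫ = ⟪π f, A (V t k)⟫ := by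
    intro f t k
    rw [hsum, hsum]
    refine Finset.sum_congr rfl fun p _ => ?_
    dsimp only
    rw [step0 p.1 t p.2 k]
  have step2 : ∀ t k, A' (V t k) = A (V t k) := by
    intro t k
    refine ext_inner_left ℂ fun x => ?_
    exact hdense_all (fun x => ⟪x, A' (V t k)⟫ = ⟪x, A (V t k)⟫)
      (isClosed_eq (Continuous.inner continuous_id continuous_const)
        (Continuous.inner continuous_id continuous_const))
      (fun f => step1 f t k) x
  have hBsum : ∀ (B : 𝒦 →L[ℂ] 𝒦) f, B (π f) = f.sum fun p a => a • B (V p.1 p.2) := by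
    intro B f
    rw [hπdef]
    simp only [piV, Finsupp.linearCombination_apply]
    rw [map_finsuppSum]
    simp only [map_smul]
  have step3 : ∀ x, A' x = A x := by
    refine hdense_all (fun x => A' x = A x)
      (isClosed_eq A'.continuous A.continuous) (fun f => ?_)
    show A' (π f) = A (π f)
    rw [hBsum A' f, hBsum A f]
    refine Finset.sum_congr rfl fun p _ => ?_
    dsimp only
    rw [step2 p.1 p.2]
  exact ContinuousLinearMap.ext step3
end

section
/- Let X be a set, H a complex Hilbert space, and K, L : X × X → L(H) positive definite kernels with K ≤ L. Suppose L admits a minimal Kolmogorov decomposition L(s,t) = V_L(s)* V_L(t) with V_L(t) : H → 𝒦_L, and let K(s,t) = V_K(s)* V_K(t) be any Kolmogorov decomposition of K with V_K(t) : H → 𝒦_K. Then there exists a unique bounded operator W : 𝒦_L → 𝒦_K with ‖W‖ ≤ 1 such that W V_L(t) h = V_K(t) h for all t ∈ X and h ∈ H; moreover K(s,t) = V_L(s)* (W* W) V_L(t) for all s, t ∈ X. -/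
open scoped ComplexInnerProductSpace ComplexOrder NNReal

theorem stmt7_key {X H 𝒦L 𝒦K : Type*} [NormedAddCommGroup H] [InnerProductSpace ℂ H]
    [CompleteSpace H] [NormedAddCommGroup 𝒦L] [InnerProductSpace ℂ 𝒦L] [CompleteSpace 𝒦L]
    [NormedAddCommGroup 𝒦K] [InnerProductSpace ℂ 𝒦K] [CompleteSpace 𝒦K]
    (K L : X → X → H →L[ℂ] H)
    (hKL : IsPDKernel (fun s t => L s t - K s t))
    (VL : X → H →L[ℂ] 𝒦L) (VK : X → H →L[ℂ] 𝒦K)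
    (hdecL : ∀ s t, L s t = ContinuousLinearMap.adjoint (VL s) ∘L VL t)
    (hdecK : ∀ s t, K s t = ContinuousLinearMap.adjoint (VK s) ∘L VK t)
    (n : ℕ) (t : Fin n → X) (u : Fin n → H) :
    ‖∑ i, VK (t i) (u i)‖ ≤ ‖∑ i, VL (t i) (u i)‖ := by
  have hL' : ∀ i j, ⟪u i, L (t i) (t j) (u j)⟫ = ⟪VL (t i) (u i), VL (t j) (u j)⟫ := by
    intro i j
    rw [hdecL]
    simp [ContinuousLinearMap.adjoint_inner_right]
  have hK' : ∀ i j, ⟪u i, K (t i) (t j) (u j)⟫ = ⟪VK (t i) (u i), VK (t j) (u j)⟫ := by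
    intro i j
    rw [hdecK]
    simp [ContinuousLinearMap.adjoint_inner_right]
  have h := hKL n t u
  simp only [ContinuousLinearMap.sub_apply, inner_sub_right, hL', hK'] at h
  simp only [Finset.sum_sub_distrib, ← sum_inner, ← inner_sum] at h
  rw [inner_self_eq_norm_sq_to_K, inner_self_eq_norm_sq_to_K, sub_nonneg] at h
  have h2 : ‖∑ i, VK (t i) (u i)‖ ^ 2 ≤ ‖∑ i, VL (t i) (u i)‖ ^ 2 := by
    exact_mod_cast Complex.real_le_real.mp (by push_cast; exact h)
  exact (pow_le_pow_iff_left₀ (norm_nonneg _) (norm_nonneg _) two_ne_zero).mp h2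

/-- If `K ≤ L` are positive definite kernels, `L(s,t) = V_L(s)* V_L(t)` is a
minimal Kolmogorov decomposition and `K(s,t) = V_K(s)* V_K(t)` is any Kolmogorov decomposition
of `K`, then there is a unique bounded operator `W : 𝒦_L → 𝒦_K` with `‖W‖ ≤ 1` and
`W V_L(t) h = V_K(t) h`; moreover `K(s,t) = V_L(s)* (W* W) V_L(t)`. -/
theorem stmt7 {X H 𝒦L 𝒦K : Type*} [NormedAddCommGroup H] [InnerProductSpace ℂ H]
    [CompleteSpace H] [NormedAddCommGroup 𝒦L] [InnerProductSpace ℂ 𝒦L] [CompleteSpace 𝒦L]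
    [NormedAddCommGroup 𝒦K] [InnerProductSpace ℂ 𝒦K] [CompleteSpace 𝒦K]
    (K L : X → X → H →L[ℂ] H) (hK : IsPDKernel K) (hL : IsPDKernel L)
    (hKL : IsPDKernel (fun s t => L s t - K s t))
    (VL : X → H →L[ℂ] 𝒦L) (VK : X → H →L[ℂ] 𝒦K)
    (hdecL : ∀ s t, L s t = ContinuousLinearMap.adjoint (VL s) ∘L VL t)
    (hminL : Dense (Submodule.span ℂ {y : 𝒦L | ∃ t h, VL t h = y} : Set 𝒦L))
    (hdecK : ∀ s t, K s t = ContinuousLinearMap.adjoint (VK s) ∘L VK t) :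
    ∃! W : 𝒦L →L[ℂ] 𝒦K,
      ‖W‖ ≤ 1 ∧ (∀ (t : X) (h : H), W (VL t h) = VK t h) ∧
      ∀ s t, K s t = ContinuousLinearMap.adjoint (VL s) ∘L
        ((ContinuousLinearMap.adjoint W ∘L W) ∘L VL t) := by
  classical
  have key := stmt7_key K L hKL VL VK hdecL hdecK
  set M : Submodule ℂ (𝒦L × 𝒦K) :=
    Submodule.span ℂ {p : 𝒦L × 𝒦K | ∃ t h, (VL t h, VK t h) = p} with hM
  -- every element of M is a pair of matching finite sums
  have hrep : ∀ p ∈ M, ∃ (n : ℕ) (t : Fin n → X) (u : Fin n → H),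
      p = (∑ i, VL (t i) (u i), ∑ i, VK (t i) (u i)) := by
    intro p hp
    induction hp using Submodule.span_induction with
    | mem p hp =>
      obtain ⟨t, h, rfl⟩ := hp
      exact ⟨1, fun _ => t, fun _ => h, by simp⟩
    | zero => exact ⟨0, Fin.elim0, Fin.elim0, by simp [Prod.ext_iff]⟩
    | add p q _ _ hp hq =>
      obtain ⟨n, t, u, rfl⟩ := hp
      obtain ⟨m, t', u', rfl⟩ := hq
      refine ⟨n + m, Fin.append t t', Fin.append u u', ?_⟩
      simp [Prod.ext_iff, Fin.sum_univ_add, Fin.append_left, Fin.append_right]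
    | smul c p _ hp =>
      obtain ⟨n, t, u, rfl⟩ := hp
      exact ⟨n, t, fun i => c • u i, by
        simp [Prod.ext_iff, Prod.smul_def, Finset.smul_sum]⟩
  have hnorm : ∀ p ∈ M, ‖p.2‖ ≤ ‖p.1‖ := by
    intro p hp
    obtain ⟨n, t, u, rfl⟩ := hrep p hp
    exact key n t u
  have hg : ∀ (p : 𝒦L × 𝒦K) (_ : p ∈ M) (_ : p.fst = 0), p.snd = 0 := by
    intro p hp hp1
    have := hnorm p hp
    rw [hp1, norm_zero] at this
    exact norm_le_zero_iff.mp this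
  set f := M.toLinearPMap with hf
  have hgraph : f.graph = M := M.toLinearPMap_graph_eq hg
  have hdom : ∀ (t : X) (h : H), VL t h ∈ f.domain := by
    intro t h
    have : (VL t h, VK t h) ∈ M := Submodule.subset_span ⟨t, h, rfl⟩
    exact ⟨(VL t h, VK t h), this, rfl⟩
  have hfval : ∀ (t : X) (h : H) (hx : VL t h ∈ f.domain),
      f ⟨VL t h, hx⟩ = VK t h := by
    intro t h hx
    have hmem : (VL t h, VK t h) ∈ f.graph := by
      rw [hgraph]; exact Submodule.subset_span ⟨t, h, rfl⟩
    rw [LinearPMap.mem_graph_iff] at hmem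
    obtain ⟨y, hy1, hy2⟩ := hmem
    rwa [show (⟨VL t h, hx⟩ : f.domain) = y from Subtype.ext hy1.symm]
  have hfbound : ∀ x : f.domain, ‖f x‖ ≤ 1 * ‖x‖ := by
    intro x
    have hmem : ((x : 𝒦L), f x) ∈ M := by
      rw [← hgraph]; exact f.mem_graph x
    simpa using hnorm _ hmem
  set g : f.domain →L[ℂ] 𝒦K := LinearMap.mkContinuous f.toFun 1 hfbound with hgdef
  set e : f.domain →L[ℂ] 𝒦L := f.domain.subtypeL with hedef
  have h_e : ∀ x : f.domain, ‖x‖ ≤ (1 : ℝ≥0) * ‖e x‖ := by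
    intro x; simp [hedef]
  have h_dense : DenseRange e := by
    have hr : Set.range e = (f.domain : Set 𝒦L) := Subtype.range_val
    have himg : (LinearMap.fst ℂ 𝒦L 𝒦K) '' {p : 𝒦L × 𝒦K | ∃ t h, (VL t h, VK t h) = p}
        = {y : 𝒦L | ∃ t h, VL t h = y} := by
      ext y
      constructor
      · rintro ⟨p, ⟨t, h, rfl⟩, rfl⟩
        exact ⟨t, h, rfl⟩
      · rintro ⟨t, h, rfl⟩
        exact ⟨(VL t h, VK t h), ⟨t, h, rfl⟩, rfl⟩
    have hDeq : f.domain = Submodule.span ℂ {y : 𝒦L | ∃ t h, VL t h = y} := by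
      show M.map (LinearMap.fst ℂ 𝒦L 𝒦K) = _
      rw [hM, Submodule.map_span, himg]
    rw [DenseRange, hr, hDeq]
    exact hminL
  set W : 𝒦L →L[ℂ] 𝒦K :=
    g.extend e
    with hWdef
  have hW2 : ∀ (t : X) (h : H), W (VL t h) = VK t h := by
    intro t h
    have := ContinuousLinearMap.extend_eq g h_dense
      (ContinuousLinearMap.isUniformEmbedding_of_bound e h_e).isUniformInducing
      ⟨VL t h, hdom t h⟩
    rw [hWdef]
    have he' : e ⟨VL t h, hdom t h⟩ = VL t h := rfl
    rw [← he', this, hgdef]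
    exact hfval t h (hdom t h)
  have hWVL : ∀ t, W ∘L VL t = VK t := fun t => ContinuousLinearMap.ext (hW2 t)
  have hW1 : ‖W‖ ≤ 1 := by
    have := ContinuousLinearMap.opNorm_extend_le g h_dense h_e
    have hg1 : ‖g‖ ≤ 1 := LinearMap.mkContinuous_norm_le _ zero_le_one _
    calc ‖W‖ ≤ (1 : ℝ≥0) * ‖g‖ := this
    _ ≤ 1 := by simpa using hg1
  have hW3 : ∀ s t, K s t = ContinuousLinearMap.adjoint (VL s) ∘L
      ((ContinuousLinearMap.adjoint W ∘L W) ∘L VL t) := by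
    intro s t
    rw [hdecK]
    rw [ContinuousLinearMap.comp_assoc, hWVL t, ← ContinuousLinearMap.comp_assoc,
      ← ContinuousLinearMap.adjoint_comp, hWVL s]
  refine ⟨W, ⟨hW1, hW2, hW3⟩, ?_⟩
  rintro W' ⟨-, hW2', -⟩
  refine ContinuousLinearMap.ext_on hminL ?_
  rintro y ⟨t, h, rfl⟩
  rw [hW2' t h, hW2 t h]
end

section
/- Let d ≥ 1, H a complex Hilbert space, and K : F_d^+ × F_d^+ → L(H) a positive definite kernel with minimal Kolmogorov decomposition K(α, β) = V(α)* V(β), V(α) : H → 𝒦. The following are equivalent: (1) K_Σ ≤ K, i.e. K − K_Σ is positive definite; (2) for every finite family (α_j, u_j)_{j=1}^N in F_d^+ × H, Σ_{i=1}^d ‖Σ_{j=1}^N V(α_j i) u_j‖² ≤ ‖Σ_{j=1}^N V(α_j) u_j‖²; (3) there exist bounded operators B_1, …, B_d ∈ L(𝒦) with B_i V(α) u = V(α i) u for all α ∈ F_d^+, u ∈ H, and Σ_{i=1}^d B_i* B_i ≤ I in the Loewner order. -/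
open scoped ComplexInnerProductSpace ComplexOrder

section Aux

variable {d : ℕ} {H 𝒦 : Type*} [NormedAddCommGroup H] [InnerProductSpace ℂ H]
  [NormedAddCommGroup 𝒦] [InnerProductSpace ℂ 𝒦]

lemma sum_inner_self_eq {N : ℕ} (f : Fin N → 𝒦) :
    ∑ j, ∑ k, ⟪f j, f k⟫ = ((‖∑ j, f j‖ ^ 2 : ℝ) : ℂ) := by
  have h1 : ∑ j, ∑ k, ⟪f j, f k⟫ = ⟪∑ j, f j, ∑ k, f k⟫ := by
    rw [sum_inner]
    exact Finset.sum_congr rfl fun j _ => (inner_sum _ _ _).symm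
  rw [h1, inner_self_eq_norm_sq_to_K]; norm_cast

variable (V : List (Fin d) → H →L[ℂ] 𝒦)

lemma key_sum [CompleteSpace H] [CompleteSpace 𝒦]
    {K : List (Fin d) → List (Fin d) → H →L[ℂ] H}
    (hdec : ∀ α β, K α β = ContinuousLinearMap.adjoint (V α) ∘L V β)
    (N : ℕ) (α : Fin N → List (Fin d)) (u : Fin N → H) :
    ∑ j, ∑ k, ⟪u j, (K (α j) (α k) - ∑ i : Fin d, K (α j ++ [i]) (α k ++ [i])) (u k)⟫
      = ((‖∑ j, V (α j) (u j)‖ ^ 2 - ∑ i : Fin d, ‖∑ j, V (α j ++ [i]) (u j)‖ ^ 2 : ℝ) : ℂ) := by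
  have hterm : ∀ (a b : List (Fin d)) (x y : H), ⟪x, K a b y⟫ = ⟪V a x, V b y⟫ := by
    intro a b x y
    simp only [hdec, ContinuousLinearMap.comp_apply]
    exact ContinuousLinearMap.adjoint_inner_right _ _ _
  have : ∑ j, ∑ k, ⟪u j, (K (α j) (α k) - ∑ i : Fin d, K (α j ++ [i]) (α k ++ [i])) (u k)⟫
      = (∑ j, ∑ k, ⟪V (α j) (u j), V (α k) (u k)⟫)
        - ∑ i : Fin d, ∑ j, ∑ k, ⟪V (α j ++ [i]) (u j), V (α k ++ [i]) (u k)⟫ := by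
    rw [Finset.sum_comm (s := Finset.univ) (t := Finset.univ)
      (f := fun i j => ∑ k, ⟪V (α j ++ [i]) (u j), V (α k ++ [i]) (u k)⟫)]
    rw [← Finset.sum_sub_distrib]
    refine Finset.sum_congr rfl fun j _ => ?_
    rw [Finset.sum_comm (s := Finset.univ) (t := Finset.univ)
      (f := fun i k => ⟪V (α j ++ [i]) (u j), V (α k ++ [i]) (u k)⟫)]
    rw [← Finset.sum_sub_distrib]
    refine Finset.sum_congr rfl fun k _ => ?_
    simp only [ContinuousLinearMap.sub_apply, ContinuousLinearMap.sum_apply,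
      inner_sub_right, inner_sum, hterm]
  rw [this, sum_inner_self_eq, Complex.ofReal_sub, Complex.ofReal_sum]
  congr 1
  exact Finset.sum_congr rfl fun i _ => sum_inner_self_eq _

end Aux


section Rep

variable {d : ℕ} {H 𝒦 : Type*} [NormedAddCommGroup H] [InnerProductSpace ℂ H]
  [NormedAddCommGroup 𝒦] [InnerProductSpace ℂ 𝒦]
  (V : List (Fin d) → H →L[ℂ] 𝒦)

/-- `x` has a finite representation `x = ∑ V(α_j) u_j`. -/
def IsRep (x : 𝒦) : Prop :=
  ∃ (N : ℕ) (α : Fin N → List (Fin d)) (u : Fin N → H), ∑ j, V (α j) (u j) = x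

lemma sum_append_eq (g : List (Fin d) → H → 𝒦) {N M : ℕ}
    (α : Fin N → List (Fin d)) (β : Fin M → List (Fin d)) (u : Fin N → H) (v : Fin M → H) :
    ∑ j : Fin (N + M), g (Fin.append α β j) (Fin.append u v j)
      = (∑ j, g (α j) (u j)) + ∑ j, g (β j) (v j) := by
  simp [Fin.sum_univ_add, Fin.append_left, Fin.append_right]

variable {V}

/-- shorthand for hypothesis (2) -/
def Bd : Prop := ∀ (N : ℕ) (α : Fin N → List (Fin d)) (u : Fin N → H),
    ∑ i : Fin d, ‖∑ j, V (α j ++ [i]) (u j)‖ ^ 2 ≤ ‖∑ j, V (α j) (u j)‖ ^ 2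

lemma shift_welldef (bd : Bd (V := V)) (i : Fin d) {N M : ℕ}
    (α : Fin N → List (Fin d)) (u : Fin N → H)
    (β : Fin M → List (Fin d)) (v : Fin M → H)
    (h : ∑ j, V (α j) (u j) = ∑ j, V (β j) (v j)) :
    ∑ j, V (α j ++ [i]) (u j) = ∑ j, V (β j ++ [i]) (v j) := by
  have h0 : ∑ j : Fin (N + M), V (Fin.append α β j) (Fin.append u (fun j => -(v j)) j) = 0 := by
    rw [sum_append_eq (fun l x => V l x)]
    simp [h]
  have hb := bd (N + M) (Fin.append α β) (Fin.append u (fun j => -(v j)))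
  rw [h0, norm_zero] at hb
  have hnn : ∀ k ∈ Finset.univ, (0:ℝ) ≤ ‖∑ j, V (Fin.append α β j ++ [k]) (Fin.append u (fun j => -(v j)) j)‖ ^ 2 :=
    fun k _ => by positivity
  have hsum0 : ∑ k : Fin d, ‖∑ j, V (Fin.append α β j ++ [k]) (Fin.append u (fun j => -(v j)) j)‖ ^ 2 = 0 :=
    le_antisymm (by simpa using hb) (Finset.sum_nonneg hnn)
  have hz := (Finset.sum_eq_zero_iff_of_nonneg hnn).mp hsum0 i (Finset.mem_univ i)
  have hv : ∑ j, V (Fin.append α β j ++ [i]) (Fin.append u (fun j => -(v j)) j) = 0 := by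
    have := pow_eq_zero_iff (n := 2) (by norm_num) |>.mp hz
    simpa [norm_eq_zero] using this
  rw [sum_append_eq (fun l x => V (l ++ [i]) x)] at hv
  simpa [add_neg_eq_zero] using hv

variable (V)

noncomputable def shiftFun (i : Fin d) (x : 𝒦) : 𝒦 :=
  letI := Classical.propDecidable (IsRep V x)
  if h : IsRep V x then
    ∑ j, V (h.choose_spec.choose j ++ [i]) (h.choose_spec.choose_spec.choose j)
  else 0

variable {V}

lemma shiftFun_spec (bd : Bd (V := V)) (i : Fin d) {N : ℕ}
    (α : Fin N → List (Fin d)) (u : Fin N → H) :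
    shiftFun V i (∑ j, V (α j) (u j)) = ∑ j, V (α j ++ [i]) (u j) := by
  have hx : IsRep V (∑ j, V (α j) (u j)) := ⟨N, α, u, rfl⟩
  rw [shiftFun, dif_pos hx]
  exact shift_welldef bd i _ _ α u hx.choose_spec.choose_spec.choose_spec

lemma isRep_add {x y : 𝒦} (hx : IsRep V x) (hy : IsRep V y) : IsRep V (x + y) := by
  obtain ⟨N, α, u, rfl⟩ := hx
  obtain ⟨M, β, v, rfl⟩ := hy
  exact ⟨N + M, Fin.append α β, Fin.append u v,
    sum_append_eq (fun l x => V l x) α β u v⟩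

lemma isRep_smul (c : ℂ) {x : 𝒦} (hx : IsRep V x) : IsRep V (c • x) := by
  obtain ⟨N, α, u, rfl⟩ := hx
  exact ⟨N, α, fun j => c • u j, by simp [Finset.smul_sum]⟩

lemma shiftFun_add (bd : Bd (V := V)) (i : Fin d) {x y : 𝒦}
    (hx : IsRep V x) (hy : IsRep V y) :
    shiftFun V i (x + y) = shiftFun V i x + shiftFun V i y := by
  obtain ⟨N, α, u, rfl⟩ := hx
  obtain ⟨M, β, v, rfl⟩ := hy
  rw [← sum_append_eq (fun l x => V l x) α β u v, shiftFun_spec bd, shiftFun_spec bd,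
    shiftFun_spec bd, sum_append_eq (fun l x => V (l ++ [i]) x) α β u v]

lemma shiftFun_smul (bd : Bd (V := V)) (i : Fin d) (c : ℂ) {x : 𝒦}
    (hx : IsRep V x) : shiftFun V i (c • x) = c • shiftFun V i x := by
  obtain ⟨N, α, u, rfl⟩ := hx
  have h1 : c • ∑ j, V (α j) (u j) = ∑ j, V (α j) (c • u j) := by
    simp [Finset.smul_sum]
  rw [h1, shiftFun_spec bd, shiftFun_spec bd]
  simp [Finset.smul_sum]

lemma shiftFun_norm_le (bd : Bd (V := V)) (i : Fin d) {x : 𝒦} (hx : IsRep V x) :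
    ‖shiftFun V i x‖ ≤ ‖x‖ := by
  obtain ⟨N, α, u, rfl⟩ := hx
  rw [shiftFun_spec bd]
  have h1 : ‖∑ j, V (α j ++ [i]) (u j)‖ ^ 2
      ≤ ∑ k : Fin d, ‖∑ j, V (α j ++ [k]) (u j)‖ ^ 2 :=
    Finset.single_le_sum (f := fun k => ‖∑ j, V (α j ++ [k]) (u j)‖ ^ 2)
      (fun k _ => by positivity) (Finset.mem_univ i)
  have h2 := bd N α u
  nlinarith [norm_nonneg (∑ j, V (α j ++ [i]) (u j)), norm_nonneg (∑ j, V (α j) (u j))]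

lemma isRep_of_mem_span {x : 𝒦}
    (hx : x ∈ Submodule.span ℂ {y : 𝒦 | ∃ α h, V α h = y}) : IsRep V x := by
  refine Submodule.span_induction (fun y hy => ?_) ⟨0, fun j => j.elim0, fun j => j.elim0, by simp⟩
    (fun a b _ _ ha hb => isRep_add ha hb) (fun c a _ ha => isRep_smul c ha) hx
  obtain ⟨α, h, rfl⟩ := hy
  exact ⟨1, fun _ => α, fun _ => h, by simp⟩

end Rep
section Bop

variable {d : ℕ} {H 𝒦 : Type*} [NormedAddCommGroup H] [InnerProductSpace ℂ H]
  [NormedAddCommGroup 𝒦] [InnerProductSpace ℂ 𝒦] [CompleteSpace 𝒦]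
  {V : List (Fin d) → H →L[ℂ] 𝒦}

noncomputable def shiftOnSpan (bd : Bd (V := V)) (i : Fin d) :
    (Submodule.span ℂ {y : 𝒦 | ∃ α h, V α h = y}) →L[ℂ] 𝒦 :=
  LinearMap.mkContinuous
    { toFun := fun x => shiftFun V i x.1
      map_add' := fun x y => shiftFun_add bd i (isRep_of_mem_span x.2) (isRep_of_mem_span y.2)
      map_smul' := fun c x => shiftFun_smul bd i c (isRep_of_mem_span x.2) }
    1 (fun x => by simpa using shiftFun_norm_le bd i (isRep_of_mem_span x.2))

lemma inner_one_sub_sum (B : Fin d → 𝒦 →L[ℂ] 𝒦) (x : 𝒦) :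
    ⟪x, ((1 : 𝒦 →L[ℂ] 𝒦) - ∑ i, ContinuousLinearMap.adjoint (B i) ∘L B i) x⟫
      = ((‖x‖ ^ 2 - ∑ i, ‖B i x‖ ^ 2 : ℝ) : ℂ) := by
  have hself : ∀ y : 𝒦, ⟪y, y⟫ = ((‖y‖ ^ 2 : ℝ) : ℂ) := fun y => by
    rw [inner_self_eq_norm_sq_to_K]; norm_cast
  simp only [ContinuousLinearMap.sub_apply, ContinuousLinearMap.one_apply,
    ContinuousLinearMap.sum_apply, inner_sub_right, inner_sum,
    ContinuousLinearMap.comp_apply, ContinuousLinearMap.adjoint_inner_right, hself]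
  push_cast
  ring

end Bop

/-- For a positive definite kernel `K` on `F_d^+` with minimal Kolmogorov
decomposition `K(α,β) = V(α)* V(β)`, the following are equivalent: (1) `K_Σ ≤ K`;
(2) `∑_i ‖∑_j V(α_j i) u_j‖² ≤ ‖∑_j V(α_j) u_j‖²` for all finite families; (3) there exist
bounded shift operators `B_i` with `B_i V(α) u = V(αi) u` and `∑ B_i* B_i ≤ I`. -/
theorem stmt10 {d : ℕ} (hd : 1 ≤ d) {H 𝒦 : Type*} [NormedAddCommGroup H]
    [InnerProductSpace ℂ H] [CompleteSpace H]
    [NormedAddCommGroup 𝒦] [InnerProductSpace ℂ 𝒦] [CompleteSpace 𝒦]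
    (K : List (Fin d) → List (Fin d) → H →L[ℂ] H) (hK : IsPDKernel K)
    (V : List (Fin d) → H →L[ℂ] 𝒦)
    (hdec : ∀ α β, K α β = ContinuousLinearMap.adjoint (V α) ∘L V β)
    (hmin : Dense (Submodule.span ℂ {y : 𝒦 | ∃ α h, V α h = y} : Set 𝒦)) :
    (IsPDKernel (fun α β => K α β - ∑ i : Fin d, K (α ++ [i]) (β ++ [i]))
      ↔ ∀ (N : ℕ) (α : Fin N → List (Fin d)) (u : Fin N → H),
          ∑ i : Fin d, ‖∑ j, V (α j ++ [i]) (u j)‖ ^ 2 ≤ ‖∑ j, V (α j) (u j)‖ ^ 2)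
    ∧ ((∀ (N : ℕ) (α : Fin N → List (Fin d)) (u : Fin N → H),
          ∑ i : Fin d, ‖∑ j, V (α j ++ [i]) (u j)‖ ^ 2 ≤ ‖∑ j, V (α j) (u j)‖ ^ 2)
      ↔ ∃ B : Fin d → 𝒦 →L[ℂ] 𝒦,
          (∀ (i : Fin d) (α : List (Fin d)) (u : H), B i (V α u) = V (α ++ [i]) u) ∧
          ∀ x : 𝒦, 0 ≤ ⟪x, ((1 : 𝒦 →L[ℂ] 𝒦)
            - ∑ i, ContinuousLinearMap.adjoint (B i) ∘L B i) x⟫) := by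
  have key := key_sum V hdec
  constructor
  · constructor
    · intro h1 N α u
      have h := h1 N α u
      rw [key N α u] at h
      exact sub_nonneg.mp (Complex.zero_le_real.mp h)
    · intro h2 N α u
      rw [key N α u]
      exact Complex.zero_le_real.mpr (sub_nonneg.mpr (h2 N α u))
  · constructor
    · intro bd
      have bd' : Bd (V := V) := bd
      have hdense : DenseRange
          ((Submodule.span ℂ {y : 𝒦 | ∃ α h, V α h = y}).subtypeL) := hmin.denseRange_val
      have hu : IsUniformInducing
          ⇑((Submodule.span ℂ {y : 𝒦 | ∃ α h, V α h = y}).subtypeL) :=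
        isUniformEmbedding_subtype_val.isUniformInducing
      set B : Fin d → 𝒦 →L[ℂ] 𝒦 :=
        fun i => (shiftOnSpan bd' i).extend _ with hBdef
      have hBV : ∀ (i : Fin d) (α : List (Fin d)) (u : H), B i (V α u) = V (α ++ [i]) u := by
        intro i α u
        have hmem : V α u ∈ Submodule.span ℂ {y : 𝒦 | ∃ α h, V α h = y} :=
          Submodule.subset_span ⟨α, u, rfl⟩
        have he := ContinuousLinearMap.extend_eq (shiftOnSpan bd' i) hdense hu ⟨V α u, hmem⟩
        have hs : shiftFun V i (V α u) = V (α ++ [i]) u := by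
          simpa using shiftFun_spec bd' i (fun _ : Fin 1 => α) (fun _ : Fin 1 => u)
        simpa [hBdef, shiftOnSpan, hs] using he
      refine ⟨B, hBV, ?_⟩
      have hcontr : ∀ x : 𝒦, ∑ i : Fin d, ‖B i x‖ ^ 2 ≤ ‖x‖ ^ 2 := by
        have hcl : IsClosed {x : 𝒦 | ∑ i : Fin d, ‖B i x‖ ^ 2 ≤ ‖x‖ ^ 2} :=
          isClosed_le (by fun_prop) (by fun_prop)
        have hsub : (Submodule.span ℂ {y : 𝒦 | ∃ α h, V α h = y} : Set 𝒦)
            ⊆ {x : 𝒦 | ∑ i : Fin d, ‖B i x‖ ^ 2 ≤ ‖x‖ ^ 2} := by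
          intro x hx
          obtain ⟨N, α, u, rfl⟩ := isRep_of_mem_span hx
          have hBx : ∀ i : Fin d, B i (∑ j, V (α j) (u j)) = ∑ j, V (α j ++ [i]) (u j) := by
            intro i
            rw [map_sum]
            exact Finset.sum_congr rfl fun j _ => hBV i _ _
          simp only [Set.mem_setOf_eq, hBx]
          exact bd N α u
        intro x
        have hx : x ∈ closure (Submodule.span ℂ {y : 𝒦 | ∃ α h, V α h = y} : Set 𝒦) := hmin x
        exact closure_minimal hsub hcl hx
      intro x
      rw [inner_one_sub_sum]
      exact Complex.zero_le_real.mpr (sub_nonneg.mpr (hcontr x))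
    · rintro ⟨B, hB, hpos⟩ N α u
      have hBx : ∀ i : Fin d, B i (∑ j, V (α j) (u j)) = ∑ j, V (α j ++ [i]) (u j) := by
        intro i
        rw [map_sum]
        exact Finset.sum_congr rfl fun j _ => hB i _ _
      have h := hpos (∑ j, V (α j) (u j))
      rw [inner_one_sub_sum] at h
      have h' := sub_nonneg.mp (Complex.zero_le_real.mp h)
      calc ∑ i : Fin d, ‖∑ j, V (α j ++ [i]) (u j)‖ ^ 2
          = ∑ i : Fin d, ‖B i (∑ j, V (α j) (u j))‖ ^ 2 := by
            exact Finset.sum_congr rfl fun i _ => by rw [hBx i]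
        _ ≤ ‖∑ j, V (α j) (u j)‖ ^ 2 := h'
end

section
/- Let N ≥ 1 and let P_1, …, P_R ∈ M_N(ℂ) be nonzero orthogonal projections (P_r* = P_r = P_r²) with P_r P_s = 0 for r ≠ s and Σ_{r=1}^R P_r = I_N; write k_r for the rank of P_r. Let (Ω, P) be a probability space and A : Ω → M_N(ℂ) a measurable random matrix such that ω ↦ A(ω)^m (A(ω)^n)* is Bochner integrable for all m, n. Assume block-bi-unitary invariance: for all unitaries U, V ∈ U(N) that commute with every P_r, the law of ω ↦ U A(ω) V equals the law of A. Then for m ≠ n, E_B(E[A^m (A^n)*]) = 0, and for every m, E_B(E[A^m (A^m)*]) = Σ_{r=1}^R c_m^{(r)} P_r, where E_B(T) := Σ_{r=1}^R P_r T P_r and c_m^{(r)} := (1/k_r) Tr(P_r E[A^m (A^m)*] P_r) ≥ 0. -/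
open MeasureTheory
open scoped ComplexOrder Matrix

noncomputable instance {m n α : Type*} [MeasurableSpace α] : MeasurableSpace (Matrix m n α) :=
  inferInstanceAs (MeasurableSpace (m → n → α))

attribute [local instance] Matrix.normedAddCommGroup Matrix.normedSpace

section Aux
variable {N : ℕ}

local notation "Mat" => Matrix (Fin N) (Fin N) ℂ

lemma aux_vmv_mulVec (u v w : Fin N → ℂ) :
    Matrix.vecMulVec u v *ᵥ w = (v ⬝ᵥ w) • u := by
  funext i
  simp only [Matrix.mulVec, dotProduct, Matrix.vecMulVec_apply, Pi.smul_apply,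
    smul_eq_mul]
  rw [Finset.sum_mul]
  exact Finset.sum_congr rfl fun k _ => by ring

lemma aux_mul_vmv (A : Mat) (u v : Fin N → ℂ) :
    A * Matrix.vecMulVec u v = Matrix.vecMulVec (A *ᵥ u) v := by
  ext i j
  simp only [Matrix.mul_apply, Matrix.vecMulVec_apply, Matrix.mulVec, dotProduct,
    Finset.sum_mul]
  exact Finset.sum_congr rfl fun k _ => by ring

lemma aux_vmv_mul (A : Mat) (u v : Fin N → ℂ) :
    Matrix.vecMulVec u v * A = Matrix.vecMulVec u (v ᵥ* A) := by
  ext i j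
  simp only [Matrix.mul_apply, Matrix.vecMulVec_apply, Matrix.vecMul, dotProduct,
    Finset.mul_sum]
  exact Finset.sum_congr rfl fun k _ => by ring


lemma aux_vmv_mul_vmv (u v u' v' : Fin N → ℂ) :
    Matrix.vecMulVec u v * Matrix.vecMulVec u' v' = (v ⬝ᵥ u') • Matrix.vecMulVec u v' := by
  ext i j
  simp only [Matrix.mul_apply, Matrix.vecMulVec_apply, Matrix.smul_apply, dotProduct,
    smul_eq_mul, Finset.sum_mul]
  exact Finset.sum_congr rfl fun k _ => by ring

lemma aux_vmv_zero_left (v : Fin N → ℂ) : Matrix.vecMulVec (0 : Fin N → ℂ) v = 0 := by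
  ext i j; simp [Matrix.vecMulVec_apply]

lemma aux_vmv_zero_right (u : Fin N → ℂ) : Matrix.vecMulVec u (0 : Fin N → ℂ) = 0 := by
  ext i j; simp [Matrix.vecMulVec_apply]

lemma aux_trace_eq_rank (Q : Mat) (h : Q * Q = Q) : Q.trace = (Q.rank : ℂ) := by
  have h2 : Q.mulVecLin ∘ₗ Q.mulVecLin = Q.mulVecLin := by
    rw [← Matrix.mulVecLin_mul, h]
  have hproj : LinearMap.IsProj (LinearMap.range Q.mulVecLin) Q.mulVecLin := by
    refine ⟨fun x => LinearMap.mem_range_self _ x, ?_⟩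
    rintro x ⟨y, rfl⟩
    exact DFunLike.congr_fun h2 y
  have ht := hproj.trace
  have htr : LinearMap.trace ℂ (Fin N → ℂ) Q.mulVecLin = Q.trace := by
    rw [LinearMap.trace_eq_matrix_trace ℂ (Pi.basisFun ℂ (Fin N)),
      LinearMap.toMatrix_eq_toMatrix']
    congr 1
    ext i j
    simp only [LinearMap.toMatrix'_apply, Matrix.mulVecLin_apply]
    simp [Matrix.mulVec, dotProduct, Pi.single_apply]
  rw [← htr, ht]
  rfl

lemma aux_rank_ne_zero (Q : Mat) (h : Q ≠ 0) : Q.rank ≠ 0 := by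
  intro h0
  apply h
  have : LinearMap.range Q.mulVecLin = ⊥ := Submodule.finrank_eq_zero.mp h0
  have hz : Q.mulVecLin = 0 := LinearMap.range_eq_bot.mp this
  ext i j
  have := congrFun (congrArg DFunLike.coe hz) (Pi.single j 1)
  have := congrFun this i
  simpa [Matrix.mulVecLin_apply, Matrix.mulVec, dotProduct, Pi.single_apply] using this

end Aux

abbrev MatC (N : ℕ) := Matrix (Fin N) (Fin N) ℂ

/-- blockwise diagonalization. For a block-bi-unitarily invariant random
matrix `A` and the conditional expectation `E_B(T) = ∑_r P_r T P_r` onto the block-diagonal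
algebra, one has `E_B(E[A^m (A^n)*]) = 0` for `m ≠ n` and
`E_B(E[A^m (A^m)*]) = ∑_r c_m^{(r)} P_r` with
`c_m^{(r)} = (1/k_r) Tr(P_r E[A^m (A^m)*] P_r) ≥ 0`, where `k_r = rank P_r`. -/
theorem stmt14 {N : ℕ} (hN : 1 ≤ N) {R : ℕ}
    (Pr : Fin R → Matrix (Fin N) (Fin N) ℂ)
    (hherm : ∀ r, (Pr r)ᴴ = Pr r) (hidem : ∀ r, Pr r * Pr r = Pr r)
    (hne : ∀ r, Pr r ≠ 0)
    (horth : ∀ r s, r ≠ s → Pr r * Pr s = 0)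
    (hsum : (∑ r, Pr r) = 1)
    {Ω : Type*} [MeasurableSpace Ω] (P : Measure Ω) [IsProbabilityMeasure P]
    (A : Ω → Matrix (Fin N) (Fin N) ℂ) (hmeas : Measurable A)
    (hint : ∀ m n : ℕ, @Integrable _ _ SeminormedAddGroup.toContinuousENorm _ _
      (fun ω => A ω ^ m * (A ω ^ n)ᴴ) P)
    (hinv : ∀ U V : Matrix.unitaryGroup (Fin N) ℂ,
      (∀ r, (U : Matrix (Fin N) (Fin N) ℂ) * Pr r = Pr r * (U : Matrix (Fin N) (Fin N) ℂ)) →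
      (∀ r, (V : Matrix (Fin N) (Fin N) ℂ) * Pr r = Pr r * (V : Matrix (Fin N) (Fin N) ℂ)) →
      Measure.map (fun ω => (U : Matrix (Fin N) (Fin N) ℂ) * A ω
        * (V : Matrix (Fin N) (Fin N) ℂ)) P = Measure.map A P) :
    (∀ m n : ℕ, m ≠ n →
      (∑ r, Pr r * (∫ ω, A ω ^ m * (A ω ^ n)ᴴ ∂P) * Pr r) = 0) ∧
    (∀ m : ℕ,
      (∑ r, Pr r * (∫ ω, A ω ^ m * (A ω ^ m)ᴴ ∂P) * Pr r)
        = ∑ r, (((Pr r).rank : ℂ)⁻¹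
            * (Pr r * (∫ ω, A ω ^ m * (A ω ^ m)ᴴ ∂P) * Pr r).trace) • Pr r
      ∧ ∀ r, 0 ≤ ((Pr r).rank : ℂ)⁻¹
            * (Pr r * (∫ ω, A ω ^ m * (A ω ^ m)ᴴ ∂P) * Pr r).trace) := by
  haveI : BorelSpace (Matrix (Fin N) (Fin N) ℂ) := Pi.borelSpace
  haveI : TopologicalSpace.PseudoMetrizableSpace (MatC N) :=
    inferInstanceAs (TopologicalSpace.PseudoMetrizableSpace (Fin N → Fin N → ℂ))
  haveI : SecondCountableTopology (MatC N) :=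
    inferInstanceAs (SecondCountableTopology (Fin N → Fin N → ℂ))
  -- continuity of the polynomial maps
  have hp : ∀ k : ℕ, Continuous (fun X : MatC N => X ^ k) := by
    intro k; induction k with
    | zero => simpa [pow_zero] using continuous_const
    | succ k ih => simp only [pow_succ]; exact ih.matrix_mul continuous_id
  have hfc : ∀ m n : ℕ, Continuous (fun X : MatC N => X ^ m * (X ^ n)ᴴ) :=
    fun m n => (hp m).matrix_mul ((hp n).matrix_conjTranspose)
  -- the key consequence of the invariance assumption
  have key : ∀ (m n : ℕ) (U V : Matrix.unitaryGroup (Fin N) ℂ),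
      (∀ r, (U : MatC N) * Pr r = Pr r * (U : MatC N)) →
      (∀ r, (V : MatC N) * Pr r = Pr r * (V : MatC N)) →
      ∫ ω, ((U : MatC N) * A ω * (V : MatC N)) ^ m * (((U : MatC N) * A ω * (V : MatC N)) ^ n)ᴴ ∂P
        = ∫ ω, A ω ^ m * (A ω ^ n)ᴴ ∂P := by
    intro m n U V hU hV
    have hmapeq := hinv U V hU hV
    have hmeas2 : Measurable fun ω => (U : MatC N) * A ω * (V : MatC N) :=
      (((continuous_const.matrix_mul continuous_id).matrix_mul
        continuous_const).measurable).comp hmeas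
    have hsm : AEStronglyMeasurable (fun X : MatC N => X ^ m * (X ^ n)ᴴ) (Measure.map A P) :=
      (hfc m n).aestronglyMeasurable
    calc ∫ ω, ((U : MatC N) * A ω * (V : MatC N)) ^ m * (((U : MatC N) * A ω * (V : MatC N)) ^ n)ᴴ ∂P
        = ∫ X, X ^ m * (X ^ n)ᴴ ∂(Measure.map (fun ω => (U : MatC N) * A ω * (V : MatC N)) P) :=
          (integral_map hmeas2.aemeasurable (by rw [hmapeq]; exact hsm)).symm
      _ = ∫ X, X ^ m * (X ^ n)ᴴ ∂(Measure.map A P) := by rw [hmapeq]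
      _ = ∫ ω, A ω ^ m * (A ω ^ n)ᴴ ∂P := integral_map hmeas.aemeasurable hsm
  -- Part 1
  have part1 : ∀ m n : ℕ, m ≠ n → (∫ ω, A ω ^ m * (A ω ^ n)ᴴ ∂P) = 0 := by
    intro m n hmn
    set rr : ℝ := (m : ℝ) - (n : ℝ) with hrr
    have hr : rr ≠ 0 := sub_ne_zero.2 (by exact_mod_cast hmn)
    set w : ℂ := ((rr⁻¹ * Real.pi : ℝ) : ℂ) * Complex.I with hw
    set θ : ℂ := Complex.exp w with hθ
    have hθabs : ‖θ‖ = 1 := Complex.norm_exp_ofReal_mul_I _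
    have hUmem : θ • (1 : MatC N) ∈ Matrix.unitaryGroup (Fin N) ℂ := by
      rw [Matrix.mem_unitaryGroup_iff]
      rw [star_smul, star_one, smul_mul_smul_comm, one_mul]
      rw [Complex.star_def, Complex.mul_conj]
      rw [Complex.normSq_eq_norm_sq, hθabs]
      norm_num
    have hUcomm : ∀ s, (θ • (1 : MatC N)) * Pr s = Pr s * (θ • (1 : MatC N)) := by
      intro s; simp [smul_mul_assoc, mul_smul_comm]
    have h1comm : ∀ s, ((1 : Matrix.unitaryGroup (Fin N) ℂ) : MatC N) * Pr s
        = Pr s * ((1 : Matrix.unitaryGroup (Fin N) ℂ) : MatC N) := by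
      intro s; simp
    have h := key m n ⟨θ • (1 : MatC N), hUmem⟩ 1 hUcomm h1comm
    have hz : θ ^ m * (star θ) ^ n = -1 := by
      have h1 : θ ^ m = Complex.exp ((m : ℂ) * w) := (Complex.exp_nat_mul w m).symm
      have hsw : (starRingEnd ℂ) w = -w := by
        rw [hw]; simp [map_mul, Complex.conj_I, Complex.conj_ofReal]
      have h2 : (star θ) ^ n = Complex.exp ((n : ℂ) * (-w)) := by
        rw [hθ, Complex.star_def, ← Complex.exp_conj, hsw]
        exact (Complex.exp_nat_mul (-w) n).symm
      rw [h1, h2, ← Complex.exp_add]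
      have : (m : ℂ) * w + (n : ℂ) * (-w) = ((rr : ℝ) : ℂ) * w := by
        rw [hrr]; push_cast; ring
      rw [this, hw, ← mul_assoc, ← Complex.ofReal_mul]
      have : rr * (rr⁻¹ * Real.pi) = Real.pi := by field_simp
      rw [this]
      exact Complex.exp_pi_mul_I
    have hpt : ∀ ω, ((θ • (1 : MatC N)) * A ω * ((1 : Matrix.unitaryGroup (Fin N) ℂ) : MatC N)) ^ m
        * ((((θ • (1 : MatC N)) * A ω * ((1 : Matrix.unitaryGroup (Fin N) ℂ) : MatC N))) ^ n)ᴴ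
        = (-1 : ℂ) • (A ω ^ m * (A ω ^ n)ᴴ) := by
      intro ω
      have h1 : (θ • (1 : MatC N)) * A ω * ((1 : Matrix.unitaryGroup (Fin N) ℂ) : MatC N)
          = θ • A ω := by
        simp [smul_mul_assoc]
      rw [h1, smul_pow, smul_pow, Matrix.conjTranspose_smul, star_pow, smul_mul_smul_comm, hz]
    simp only [hpt] at h
    rw [integral_smul] at h
    have h2 : (∫ ω, A ω ^ m * (A ω ^ n)ᴴ ∂P) + (∫ ω, A ω ^ m * (A ω ^ n)ᴴ ∂P) = 0 := by
      nth_rewrite 1 [← h]; rw [neg_smul, one_smul, neg_add_cancel]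
    have h3 : (2 : ℂ) • (∫ ω, A ω ^ m * (A ω ^ n)ᴴ ∂P) = 0 := by
      rw [two_smul]; exact h2
    have := smul_eq_zero.mp h3
    simpa using this
  -- commutation of the second-moment matrix with block unitaries
  have hcommM : ∀ (m : ℕ) (W : MatC N), W ∈ Matrix.unitaryGroup (Fin N) ℂ →
      (∀ s, W * Pr s = Pr s * W) →
      (∫ ω, A ω ^ m * (A ω ^ m)ᴴ ∂P) * W = W * ∫ ω, A ω ^ m * (A ω ^ m)ᴴ ∂P := by
    intro m W hW hWc
    have hW2 : Wᴴ * W = 1 := by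
      have := Matrix.mem_unitaryGroup_iff'.mp hW
      rwa [Matrix.star_eq_conjTranspose] at this
    have hW1 : W * Wᴴ = 1 := by
      have := Matrix.mem_unitaryGroup_iff.mp hW
      rwa [Matrix.star_eq_conjTranspose] at this
    have hVmem : Wᴴ ∈ Matrix.unitaryGroup (Fin N) ℂ := by
      rw [Matrix.mem_unitaryGroup_iff, Matrix.star_eq_conjTranspose,
        Matrix.conjTranspose_conjTranspose]
      exact hW2
    have hVc : ∀ s, Wᴴ * Pr s = Pr s * Wᴴ := by
      intro s
      have h := congrArg Matrix.conjTranspose (hWc s)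
      rw [Matrix.conjTranspose_mul, Matrix.conjTranspose_mul, hherm s] at h
      exact h.symm
    have h : ∫ ω, (W * A ω * Wᴴ) ^ m * ((W * A ω * Wᴴ) ^ m)ᴴ ∂P
        = ∫ ω, A ω ^ m * (A ω ^ m)ᴴ ∂P :=
      key m m ⟨W, hW⟩ ⟨Wᴴ, hVmem⟩ hWc hVc
    have hpow : ∀ (X : MatC N) (k : ℕ), (W * X * Wᴴ) ^ k = W * X ^ k * Wᴴ := by
      intro X k; induction k with
      | zero => simp [hW1]
      | succ k ih =>
        rw [pow_succ, ih, pow_succ]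
        simp only [Matrix.mul_assoc]
        rw [show Wᴴ * (W * (X * Wᴴ)) = X * Wᴴ by rw [← Matrix.mul_assoc, hW2, Matrix.one_mul]]
    have hpt : ∀ ω, (W * A ω * Wᴴ) ^ m * ((W * A ω * Wᴴ) ^ m)ᴴ
        = W * (A ω ^ m * (A ω ^ m)ᴴ) * Wᴴ := by
      intro ω
      rw [hpow, Matrix.conjTranspose_mul, Matrix.conjTranspose_mul,
        Matrix.conjTranspose_conjTranspose]
      simp only [Matrix.mul_assoc]
      rw [show Wᴴ * (W * ((A ω ^ m)ᴴ * Wᴴ)) = (A ω ^ m)ᴴ * Wᴴ by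
        rw [← Matrix.mul_assoc, hW2, Matrix.one_mul]]
    simp only [hpt] at h
    let L : MatC N →ₗ[ℂ] MatC N :=
      { toFun := fun T => W * T * Wᴴ
        map_add' := fun a b => by simp [mul_add, add_mul]
        map_smul' := fun c T => by simp [mul_smul_comm, smul_mul_assoc] }
    have hL : ∫ ω, W * (A ω ^ m * (A ω ^ m)ᴴ) * Wᴴ ∂P
        = W * (∫ ω, A ω ^ m * (A ω ^ m)ᴴ ∂P) * Wᴴ :=
      ContinuousLinearMap.integral_comp_comm L.toContinuousLinearMap (hint m m)
    rw [hL] at h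
    calc (∫ ω, A ω ^ m * (A ω ^ m)ᴴ ∂P) * W
        = W * (∫ ω, A ω ^ m * (A ω ^ m)ᴴ ∂P) * Wᴴ * W := by rw [h]
      _ = W * (∫ ω, A ω ^ m * (A ω ^ m)ᴴ ∂P) := by
          rw [Matrix.mul_assoc, Matrix.mul_assoc, hW2, Matrix.mul_one]
  -- the integral restricted to a block is a scalar multiple of the block projection
  have main2 : ∀ (m : ℕ) (r : Fin R), ∃ c : ℂ,
      Pr r * (∫ ω, A ω ^ m * (A ω ^ m)ᴴ ∂P) * Pr r = c • Pr r := by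
    intro m r
    set Mm := ∫ ω, A ω ^ m * (A ω ^ m)ᴴ ∂P with hMm
    have hS : ∀ x : Fin N → ℂ, Pr r *ᵥ x = x →
        Mm * Matrix.vecMulVec x (star x) = Matrix.vecMulVec x (star x) * Mm := by
      intro x hx
      by_cases hx0 : x = 0
      · subst hx0
        rw [aux_vmv_zero_left]
        simp
      · set c : ℂ := star x ⬝ᵥ x with hc
        have hc0 : c ≠ 0 := fun h => hx0 (dotProduct_star_self_eq_zero.mp h)
        have hcs : star c = c := by
          rw [hc]
          simp only [dotProduct, star_sum, star_mul', star_star, Pi.star_apply]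
          exact Finset.sum_congr rfl fun k _ => mul_comm _ _
        set S : MatC N := Matrix.vecMulVec x (star x) with hSdef
        have hSh : star S = S := by
          rw [Matrix.star_eq_conjTranspose]
          ext i j
          simp only [Matrix.conjTranspose_apply, hSdef, Matrix.vecMulVec_apply, Pi.star_apply,
            star_mul', star_star]
          ring
        have hSS : S * S = c • S := by
          rw [hSdef, aux_vmv_mul_vmv]
        set a : ℂ := 2 / c with ha
        have haz : a ≠ 0 := div_ne_zero two_ne_zero hc0
        set W : MatC N := 1 - a • S with hWdef
        have hWW : W * W = 1 := by
          have hac : a * a * c = a + a := by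
            rw [ha]; field_simp; ring
          have hss2 : (a • S) * (a • S) = (a + a) • S := by
            rw [smul_mul_assoc, mul_smul_comm, hSS, smul_smul, smul_smul, hac]
          rw [hWdef, sub_mul, mul_sub, mul_sub, hss2, add_smul]
          simp only [one_mul, mul_one]
          abel
        have hWst : star W = W := by
          have hsa : star a = a := by rw [ha, star_div₀, hcs]; norm_num
          rw [hWdef, star_sub, star_one, star_smul, hSh, hsa]
        have hWmem : W ∈ Matrix.unitaryGroup (Fin N) ℂ := by
          rw [Matrix.mem_unitaryGroup_iff, hWst]
          exact hWW
        have hxs : ∀ s : Fin R, Pr s *ᵥ x = if s = r then x else 0 := by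
          intro s
          by_cases hsr : s = r
          · subst hsr; simp [hx]
          · rw [← hx, Matrix.mulVec_mulVec, horth s r hsr]
            simp [hsr]
        have hWc : ∀ s, W * Pr s = Pr s * W := by
          intro s
          have hPS : Pr s * S = S * Pr s := by
            rw [hSdef, aux_mul_vmv, aux_vmv_mul]
            have hvm : star x ᵥ* Pr s = star (Pr s *ᵥ x) := by
              rw [Matrix.star_mulVec, hherm s]
            rw [hvm, hxs s]
            by_cases hsr : s = r
            · simp [hsr]
            · simp only [hsr, if_false, star_zero]
              rw [aux_vmv_zero_left, aux_vmv_zero_right]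
          rw [hWdef, sub_mul, mul_sub, one_mul, mul_one, smul_mul_assoc, mul_smul_comm, hPS]
        have hMW := hcommM m W hWmem hWc
        rw [← hMm] at hMW
        rw [hWdef, mul_sub, sub_mul, mul_one, one_mul, mul_smul_comm, smul_mul_assoc] at hMW
        have h2 : a • (Mm * S) = a • (S * Mm) := by
          have := sub_right_injective hMW
          exact this
        exact smul_right_injective _ haz h2
    have hT : ∀ x y : Fin N → ℂ, Pr r *ᵥ x = x → Pr r *ᵥ y = y →
        Mm * Matrix.vecMulVec x (star y) = Matrix.vecMulVec x (star y) * Mm := by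
      intro x y hx hy
      have hxy1 : Pr r *ᵥ (x + y) = x + y := by rw [Matrix.mulVec_add, hx, hy]
      have hxy2 : Pr r *ᵥ (x - y) = x - y := by rw [Matrix.mulVec_sub, hx, hy]
      have hxy3 : Pr r *ᵥ (x + Complex.I • y) = x + Complex.I • y := by
        rw [Matrix.mulVec_add, Matrix.mulVec_smul, hx, hy]
      have hxy4 : Pr r *ᵥ (x - Complex.I • y) = x - Complex.I • y := by
        rw [Matrix.mulVec_sub, Matrix.mulVec_smul, hx, hy]
      have h1 := hS _ hxy1
      have h2 := hS _ hxy2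
      have h3 := hS _ hxy3
      have h4 := hS _ hxy4
      have h4id : (4:ℂ) • Matrix.vecMulVec x (star y)
          = Matrix.vecMulVec (x+y) (star (x+y)) - Matrix.vecMulVec (x-y) (star (x-y))
            + Complex.I • Matrix.vecMulVec (x + Complex.I • y) (star (x + Complex.I • y))
            - Complex.I • Matrix.vecMulVec (x - Complex.I • y) (star (x - Complex.I • y)) := by
        ext i j
        simp only [Matrix.smul_apply, Matrix.sub_apply, Matrix.add_apply,
          Matrix.vecMulVec_apply, Pi.add_apply, Pi.sub_apply, Pi.smul_apply, Pi.star_apply,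
          smul_eq_mul, Complex.star_def, map_add, map_sub, map_mul, Complex.conj_I]
        ring_nf
        simp only [Complex.I_sq]
        ring
      have h5 : Mm * ((4:ℂ) • Matrix.vecMulVec x (star y))
          = ((4:ℂ) • Matrix.vecMulVec x (star y)) * Mm := by
        rw [h4id]
        simp only [mul_add, add_mul, mul_sub, sub_mul, mul_smul_comm, smul_mul_assoc,
          h1, h2, h3, h4]
      rw [mul_smul_comm, smul_mul_assoc] at h5
      exact smul_right_injective _ (by norm_num : (4:ℂ) ≠ 0) h5
    have hexnz : ∃ i j, Pr r i j ≠ 0 := by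
      by_contra hcon
      push_neg at hcon
      exact hne r (by ext i j; simpa using hcon i j)
    obtain ⟨i0, j0, hij⟩ := hexnz
    have hcol : ∀ j : Fin N, Pr r *ᵥ (fun k => Pr r k j) = fun k => Pr r k j := by
      intro j
      funext k
      simp only [Matrix.mulVec, dotProduct]
      rw [← Matrix.mul_apply, hidem r]
    set y0 : Fin N → ℂ := fun k => Pr r k j0 with hy0def
    have hy0 : Pr r *ᵥ y0 = y0 := hcol j0
    have hy0nz : y0 ≠ 0 := fun h => hij (by simpa [hy0def] using congrFun h i0)
    set d : ℂ := star y0 ⬝ᵥ y0 with hd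
    have hd0 : d ≠ 0 := fun h => hy0nz (dotProduct_star_self_eq_zero.mp h)
    set t : ℂ := star y0 ⬝ᵥ (Mm *ᵥ y0) with ht
    refine ⟨t / d, ?_⟩
    have hMx : ∀ x : Fin N → ℂ, Pr r *ᵥ x = x → Mm *ᵥ x = (t / d) • x := by
      intro x hx
      have h := congrArg (fun B : MatC N => B *ᵥ y0) (hT x y0 hx hy0)
      rw [← Matrix.mulVec_mulVec, ← Matrix.mulVec_mulVec, aux_vmv_mulVec, ← hd,
        Matrix.mulVec_smul, aux_vmv_mulVec, ← ht] at h
      -- h : d • (Mm *ᵥ x) = t • x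
      have := congrArg (fun v : Fin N → ℂ => d⁻¹ • v) h
      simp only [smul_smul, inv_mul_cancel₀ hd0, one_smul] at this
      rw [this, div_eq_inv_mul]
    have hMP : Mm * Pr r = (t / d) • Pr r := by
      ext i j
      have h := congrFun (hMx _ (hcol j)) i
      simp only [Matrix.mulVec, dotProduct, Pi.smul_apply, smul_eq_mul] at h
      rw [Matrix.mul_apply, Matrix.smul_apply, smul_eq_mul]
      exact h
    rw [Matrix.mul_assoc, hMP, mul_smul_comm, hidem r]
  -- positive semidefiniteness of the averaged matrix
  have hPSD : ∀ (m : ℕ) (x : Fin N → ℂ),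
      0 ≤ star x ⬝ᵥ ((∫ ω, A ω ^ m * (A ω ^ m)ᴴ ∂P) *ᵥ x) := by
    intro m x
    let φ : MatC N →ₗ[ℂ] ℂ :=
      { toFun := fun T => star x ⬝ᵥ (T *ᵥ x)
        map_add' := fun a b => by simp [Matrix.add_mulVec, dotProduct_add]
        map_smul' := fun c T => by simp [Matrix.smul_mulVec]
      }
    have hφ : ∫ ω, star x ⬝ᵥ ((A ω ^ m * (A ω ^ m)ᴴ) *ᵥ x) ∂P
        = star x ⬝ᵥ ((∫ ω, A ω ^ m * (A ω ^ m)ᴴ ∂P) *ᵥ x) :=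
      ContinuousLinearMap.integral_comp_comm φ.toContinuousLinearMap (hint m m)
    have hnn : ∀ ω, 0 ≤ star x ⬝ᵥ ((A ω ^ m * (A ω ^ m)ᴴ) *ᵥ x) := fun ω =>
      (Matrix.posSemidef_self_mul_conjTranspose (A ω ^ m)).dotProduct_mulVec_nonneg x
    have hre : (fun ω => star x ⬝ᵥ ((A ω ^ m * (A ω ^ m)ᴴ) *ᵥ x))
        = fun ω => (RCLike.ofReal ((star x ⬝ᵥ ((A ω ^ m * (A ω ^ m)ᴴ) *ᵥ x)).re) : ℂ) := by
      funext ω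
      obtain ⟨h1, h2⟩ := Complex.nonneg_iff.mp (hnn ω)
      exact Complex.ext rfl h2.symm
    rw [← hφ, hre, integral_ofReal]
    rw [show ((RCLike.ofReal (∫ ω, (star x ⬝ᵥ ((A ω ^ m * (A ω ^ m)ᴴ) *ᵥ x)).re ∂P)) : ℂ)
      = ((((∫ ω, (star x ⬝ᵥ ((A ω ^ m * (A ω ^ m)ᴴ) *ᵥ x)).re ∂P) : ℝ)) : ℂ) from rfl,
      Complex.zero_le_real]
    apply integral_nonneg
    intro ω
    exact (Complex.nonneg_iff.mp (hnn ω)).1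
  refine ⟨fun m n hmn => by rw [part1 m n hmn]; simp, fun m => ?_⟩
  constructor
  · refine Finset.sum_congr rfl fun r _ => ?_
    obtain ⟨c, hc⟩ := main2 m r
    rw [hc, Matrix.trace_smul, aux_trace_eq_rank (Pr r) (hidem r), smul_eq_mul]
    have hrk : (((Pr r).rank : ℂ)) ≠ 0 := Nat.cast_ne_zero.mpr (aux_rank_ne_zero _ (hne r))
    congr 1
    field_simp
  · intro r
    have hsymm : ∀ k j, star (Pr r k j) = Pr r j k := fun k j => by
      have := congrFun (congrFun (hherm r) j) k
      rwa [Matrix.conjTranspose_apply] at this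
    have htr : (Pr r * (∫ ω, A ω ^ m * (A ω ^ m)ᴴ ∂P) * Pr r).trace
        = ∑ j, star (fun k => Pr r k j) ⬝ᵥ
            ((∫ ω, A ω ^ m * (A ω ^ m)ᴴ ∂P) *ᵥ (fun k => Pr r k j)) := by
      rw [Matrix.trace]
      refine Finset.sum_congr rfl fun j _ => ?_
      simp only [Matrix.diag_apply, Matrix.mul_apply, dotProduct, Matrix.mulVec,
        Pi.star_apply, hsymm, Finset.sum_mul, Finset.mul_sum]
      rw [Finset.sum_comm]
      exact Finset.sum_congr rfl fun k _ => Finset.sum_congr rfl fun l _ => by ring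
    have h1 : (0:ℂ) ≤ (Pr r * (∫ ω, A ω ^ m * (A ω ^ m)ᴴ ∂P) * Pr r).trace := by
      rw [htr]
      exact Finset.sum_nonneg fun j _ => hPSD m _
    have h2 : (0:ℂ) ≤ (((Pr r).rank : ℂ))⁻¹ := by
      rw [show (((Pr r).rank : ℂ))⁻¹ = (((((Pr r).rank : ℝ))⁻¹ : ℝ) : ℂ) by push_cast; ring]
      exact Complex.zero_le_real.mpr (by positivity)
    exact mul_nonneg h2 h1
end
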